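/- Let n be a positive integer and let r be a real number with 0 < r < n. Then add(I^r_{n,σ-fin}) = ℵ₁: the least cardinality of a family of subsets of ℝⁿ, each of σ-finite r-dimensional Hausdorff measure, whose union is not of σ-finite r-dimensional Hausdorff measure, equals ℵ₁. -/

import Mathlib

open MeasureTheory Set
open scoped ENNReal MeasureTheory

noncomputable section


/-- A set `H ⊆ ℝⁿ` is of σ-finite `r`-dimensional Hausdorff measure if it is a countable
union of sets each of finite `r`-dimensional Hausdorff measure. -/
def SigmaFiniteHausdorff (n : ℕ) (r : ℝ) (H : Set (EuclideanSpace ℝ (Fin n))) : Prop :=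
  ∃ A : ℕ → Set (EuclideanSpace ℝ (Fin n)), H = ⋃ k, A k ∧ ∀ k, μH[r] (A k) < ⊤


/-- `addOf J` is the least cardinality of a subfamily of `J` whose union is not in `J`. -/
def addOf {α : Type*} (J : Set (Set α)) : Cardinal :=
  sInf { c : Cardinal | ∃ S ⊆ J, ⋃₀ S ∉ J ∧ Cardinal.mk S = c }


section Construction

open Metric Filter

namespace CantorConstruction

/-- The alphabet: a flavor bit plus a position in an `n`-dimensional grid of pitch `1/Q`. -/
abbrev Alph (n Q : ℕ) := Bool × (Fin n → Fin Q)

def eA {n : ℕ} (Q : ℕ) (v : Alph n Q) (i : Fin n) : ℕ :=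
  (v.2 i : ℕ) + if i.val = 0 ∧ v.1 = true then Q else 0

lemma eA_lt {n Q : ℕ} (v : Alph n Q) (i : Fin n) : eA Q v i < 2 * Q := by
  have h := (v.2 i).isLt
  unfold eA; split <;> omega

lemma eA_inj {n Q : ℕ} (hn : 0 < n) {v w : Alph n Q}
    (h : ∀ i, eA Q v i = eA Q w i) : v = w := by
  obtain ⟨b, f⟩ := v
  obtain ⟨b', f'⟩ := w
  set i0 : Fin n := ⟨0, hn⟩ with hi0
  have h0 := h i0
  have hf := (f i0).isLt
  have hf' := (f' i0).isLt
  simp only [eA] at h0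
  have hbb : b = b' := by
    cases b <;> cases b' <;> simp_all <;> omega
  subst hbb
  have hfun : f = f' := by
    funext i
    have hi := h i
    simp only [eA] at hi
    by_cases hiv : i.val = 0
    · have : i = i0 := Fin.ext hiv
      subst this
      cases b <;> simp_all <;> omega
    · simp [hiv] at hi
      exact Fin.ext hi
  simp [hfun]

def off {n : ℕ} (Q : ℕ) (v : Alph n Q) (i : Fin n) : ℝ := (eA Q v i : ℝ) / (2 * Q)

lemma off_nonneg {n Q : ℕ} (v : Alph n Q) (i : Fin n) : 0 ≤ off Q v i := by
  unfold off; positivity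

lemma off_le_one {n Q : ℕ} (hQ : 0 < Q) (v : Alph n Q) (i : Fin n) : off Q v i ≤ 1 := by
  unfold off
  rw [div_le_one (by positivity)]
  exact_mod_cast (eA_lt v i).le

lemma off_sep {n Q : ℕ} (hn : 0 < n) (hQ : 0 < Q) {v w : Alph n Q} (hvw : v ≠ w) :
    ∃ i, 1 / (2 * Q) ≤ |off Q v i - off Q w i| := by
  have : ∃ i, eA Q v i ≠ eA Q w i := by
    by_contra hc
    push_neg at hc
    exact hvw (eA_inj hn hc)
  obtain ⟨i, hi⟩ := this
  refine ⟨i, ?_⟩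
  unfold off
  rw [div_sub_div_same, abs_div, abs_of_nonneg (by positivity : (0:ℝ) ≤ 2*(Q:ℝ))]
  gcongr
  have hz : ((eA Q v i : ℤ) - (eA Q w i : ℤ)) ≠ 0 := by
    intro hc
    exact hi (by exact_mod_cast sub_eq_zero.mp hc)
  have h2 : (1:ℤ) ≤ |(eA Q v i : ℤ) - (eA Q w i : ℤ)| := Int.one_le_abs hz
  calc (1:ℝ) ≤ ((|(eA Q v i : ℤ) - (eA Q w i : ℤ)| : ℤ) : ℝ) := by exact_mod_cast h2
    _ = |(eA Q v i : ℝ) - (eA Q w i : ℝ)| := by push_cast; ring_nf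


/-- The contraction ratio: `(Q^n)^(-1/r)`, so that `N * lam ^ r = 1` with `N = Q^n` children. -/
def lam (n Q : ℕ) (r : ℝ) : ℝ := ((Q:ℝ) ^ n) ^ (-1/r)

section Lam

variable {n Q : ℕ} {r : ℝ}

lemma base_pos (hQ : 0 < Q) : (0:ℝ) < (Q:ℝ) ^ n := by positivity

lemma lam_pos (hQ : 0 < Q) : 0 < lam n Q r := Real.rpow_pos_of_pos (base_pos hQ) _

lemma lam_le (hQ : 0 < Q) (hr0 : 0 < r)
    (hkey : ((16*(Q:ℝ))) ^ r ≤ (Q:ℝ) ^ n) : lam n Q r ≤ 1/(16*Q) := by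
  have hB : (0:ℝ) < (Q:ℝ) ^ n := base_pos hQ
  have h16 : (0:ℝ) < 16*(Q:ℝ) := by positivity
  have step : (16*(Q:ℝ)) ≤ ((Q:ℝ) ^ n) ^ (1/r) := by
    have h1 : (((16*(Q:ℝ))) ^ r) ^ (1/r) ≤ ((Q:ℝ) ^ n) ^ (1/r) :=
      Real.rpow_le_rpow (Real.rpow_nonneg h16.le _) hkey (by positivity)
    calc (16*(Q:ℝ)) = ((16*(Q:ℝ))) ^ (r * (1/r)) := by
          rw [mul_one_div_cancel hr0.ne', Real.rpow_one]
      _ = (((16*(Q:ℝ))) ^ r) ^ (1/r) := Real.rpow_mul h16.le _ _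
      _ ≤ _ := h1
  have hpos : (0:ℝ) < ((Q:ℝ) ^ n) ^ (1/r) := Real.rpow_pos_of_pos hB _
  have : lam n Q r = (((Q:ℝ) ^ n) ^ (1/r))⁻¹ := by
    rw [lam, neg_div, Real.rpow_neg hB.le]
  rw [this, one_div (16*(Q:ℝ))]
  exact inv_anti₀ h16 step

lemma lam_le_half (hQ : 0 < Q) (hr0 : 0 < r)
    (hkey : ((16*(Q:ℝ))) ^ r ≤ (Q:ℝ) ^ n) : lam n Q r ≤ 1/2 := by
  have h := lam_le hQ hr0 hkey
  have : (1:ℝ)/(16*Q) ≤ 1/2 := by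
    apply div_le_div_of_nonneg_left (by norm_num) (by norm_num)
    have : (1:ℝ) ≤ Q := by exact_mod_cast hQ
    nlinarith
  linarith

lemma lam_lt_one (hQ : 0 < Q) (hr0 : 0 < r)
    (hkey : ((16*(Q:ℝ))) ^ r ≤ (Q:ℝ) ^ n) : lam n Q r < 1 :=
  lt_of_le_of_lt (lam_le_half hQ hr0 hkey) (by norm_num)

lemma lam_pow_rpow (hQ : 0 < Q) (hr0 : 0 < r) (j : ℕ) :
    (lam n Q r ^ j) ^ r = (((Q:ℝ) ^ n) ^ j)⁻¹ := by
  have hB : (0:ℝ) < (Q:ℝ) ^ n := base_pos hQ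
  have h1 : lam n Q r ^ j = ((Q:ℝ) ^ n) ^ ((-1/r) * j) := by
    rw [lam, ← Real.rpow_natCast (((Q:ℝ) ^ n) ^ (-1/r)) j, ← Real.rpow_mul hB.le]
  rw [h1, ← Real.rpow_mul hB.le]
  have : (-1/r) * (j:ℝ) * r = -(j:ℝ) := by field_simp
  rw [this, Real.rpow_neg hB.le, Real.rpow_natCast]

end Lam

section Geometry

variable {n Q : ℕ} {L : ℝ}

/-- The coding map of the Cantor-type construction. -/
def Phi (n Q : ℕ) (L : ℝ) (a : ℕ → Alph n Q) : EuclideanSpace ℝ (Fin n) :=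
  (WithLp.equiv 2 (Fin n → ℝ)).symm (fun i => ∑' j, L ^ j * off Q (a j) i)

lemma Phi_apply (a : ℕ → Alph n Q) (i : Fin n) :
    Phi n Q L a i = ∑' j, L ^ j * off Q (a j) i :=
  rfl

lemma term_abs_le (hQ : 0 < Q) (hL0 : 0 ≤ L) (a : ℕ → Alph n Q) (i : Fin n) (j : ℕ) :
    |L ^ j * off Q (a j) i| ≤ L ^ j := by
  rw [abs_mul, abs_of_nonneg (pow_nonneg hL0 j), abs_of_nonneg (off_nonneg _ _)]
  calc L ^ j * off Q (a j) i ≤ L ^ j * 1 :=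
        mul_le_mul_of_nonneg_left (off_le_one hQ _ _) (pow_nonneg hL0 j)
    _ = L ^ j := mul_one _

lemma summable_phi (hQ : 0 < Q) (hL0 : 0 ≤ L) (hL1 : L < 1) (a : ℕ → Alph n Q) (i : Fin n) :
    Summable (fun j => L ^ j * off Q (a j) i) := by
  apply Summable.of_norm
  apply Summable.of_nonneg_of_le (fun j => norm_nonneg _) (fun j => term_abs_le hQ hL0 a i j)
  exact summable_geometric_of_lt_one hL0 hL1

lemma summable_phi_shift (hQ : 0 < Q) (hL0 : 0 ≤ L) (hL1 : L < 1) (a : ℕ → Alph n Q) (i : Fin n)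
    (c : ℕ) : Summable (fun m => L ^ (m + c) * off Q (a (m + c)) i) :=
  (summable_nat_add_iff c).2 (summable_phi hQ hL0 hL1 a i)

lemma tail_bound (hQ : 0 < Q) (hL0 : 0 ≤ L) (hL2 : L ≤ 1/2) (a : ℕ → Alph n Q) (i : Fin n)
    (c : ℕ) : |∑' m, L ^ (m + c) * off Q (a (m + c)) i| ≤ 2 * L ^ c := by
  have hL1 : L < 1 := lt_of_le_of_lt hL2 (by norm_num)
  have hgs : Summable (fun m : ℕ => L ^ (m + c)) := by
    simp only [pow_add]
    exact (summable_geometric_of_lt_one hL0 hL1).mul_right _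
  have habs : Summable (fun m => |L ^ (m + c) * off Q (a (m + c)) i|) :=
    Summable.of_nonneg_of_le (fun m => abs_nonneg _) (fun m => term_abs_le hQ hL0 a i _) hgs
  have habs' : Summable (fun m => ‖L ^ (m + c) * off Q (a (m + c)) i‖) := by
    simpa only [Real.norm_eq_abs] using habs
  calc |∑' m, L ^ (m + c) * off Q (a (m + c)) i|
      ≤ ∑' m, |L ^ (m + c) * off Q (a (m + c)) i| := by
        simpa only [Real.norm_eq_abs] using norm_tsum_le_tsum_norm habs' 
    _ ≤ ∑' m : ℕ, L ^ (m + c) := Summable.tsum_le_tsum (fun m => term_abs_le hQ hL0 a i _) habs hgs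
    _ = (1 - L)⁻¹ * L ^ c := by
        simp only [pow_add]
        rw [tsum_mul_right, tsum_geometric_of_lt_one hL0 hL1]
    _ ≤ 2 * L ^ c := by
        apply mul_le_mul_of_nonneg_right _ (pow_nonneg hL0 c)
        have h2 : (1:ℝ)/2 ≤ 1 - L := by linarith
        calc (1-L)⁻¹ ≤ ((1:ℝ)/2)⁻¹ := inv_anti₀ (by norm_num) h2
          _ = 2 := by norm_num

lemma coord_le_dist (x y : EuclideanSpace ℝ (Fin n)) (i : Fin n) :
    |x i - y i| ≤ dist x y := by
  rw [EuclideanSpace.dist_eq]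
  have h1 : |x i - y i| = Real.sqrt (dist (x i) (y i) ^ 2) := by
    rw [Real.sqrt_sq_eq_abs, Real.dist_eq, abs_abs]
  rw [h1]
  exact Real.sqrt_le_sqrt (Finset.single_le_sum (f := fun j => dist (x j) (y j)^2)
    (fun j _ => sq_nonneg _) (Finset.mem_univ i))

lemma dist_le_of_coord (x y : EuclideanSpace ℝ (Fin n)) {c : ℝ} (hc : 0 ≤ c)
    (h : ∀ i, |x i - y i| ≤ c) : dist x y ≤ n * c := by
  rw [EuclideanSpace.dist_eq]
  have hsum : ∑ i, dist (x i) (y i) ^ 2 ≤ ((n:ℝ) * c)^2 := by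
    calc ∑ i, dist (x i) (y i) ^ 2 ≤ ∑ _i : Fin n, c^2 :=
          Finset.sum_le_sum (fun i _ => by
            rw [Real.dist_eq]
            exact pow_le_pow_left₀ (abs_nonneg _) (h i) 2)
      _ = (n:ℝ) * c^2 := by
          simp [Finset.sum_const, nsmul_eq_mul]
      _ ≤ ((n:ℝ) * c)^2 := by
          rcases Nat.eq_zero_or_pos n with h0 | h0
          · simp [h0]
          · have h1 : (1:ℝ) ≤ n := by exact_mod_cast h0
            nlinarith
  calc Real.sqrt (∑ i, dist (x i) (y i) ^ 2) ≤ Real.sqrt (((n:ℝ)*c)^2) :=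
        Real.sqrt_le_sqrt hsum
    _ = (n:ℝ)*c := Real.sqrt_sq (by positivity)

lemma dist_Phi_le (hn : 0 < n) (hQ : 0 < Q) (hL0 : 0 ≤ L) (hL2 : L ≤ 1/2)
    {a b : ℕ → Alph n Q} {j : ℕ} (hab : ∀ m, m < j → a m = b m) :
    dist (Phi n Q L a) (Phi n Q L b) ≤ (4*n) * L^j := by
  have hL1 : L < 1 := lt_of_le_of_lt hL2 (by norm_num)
  have key : ∀ i, |Phi n Q L a i - Phi n Q L b i| ≤ 4 * L ^ j := by
    intro i
    rw [Phi_apply, Phi_apply,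
      ← Summable.sum_add_tsum_nat_add j (summable_phi hQ hL0 hL1 a i),
      ← Summable.sum_add_tsum_nat_add j (summable_phi hQ hL0 hL1 b i)]
    have heq : ∑ m ∈ Finset.range j, L^m * off Q (a m) i
        = ∑ m ∈ Finset.range j, L^m * off Q (b m) i :=
      Finset.sum_congr rfl (fun m hm => by rw [hab m (Finset.mem_range.1 hm)])
    rw [heq]
    have h2 : ∀ u v w : ℝ, |(u + v) - (u + w)| = |v - w| := by
      intro u v w; congr 1; ring
    rw [h2]
    calc |(∑' m, L^(m+j) * off Q (a (m+j)) i) - (∑' m, L^(m+j) * off Q (b (m+j)) i)|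
        ≤ |∑' m, L^(m+j) * off Q (a (m+j)) i| + |∑' m, L^(m+j) * off Q (b (m+j)) i| :=
          abs_sub _ _
      _ ≤ 2 * L^j + 2 * L^j := add_le_add (tail_bound hQ hL0 hL2 a i j) (tail_bound hQ hL0 hL2 b i j)
      _ = 4 * L^j := by ring
  calc dist (Phi n Q L a) (Phi n Q L b) ≤ (n:ℝ) * (4 * L^j) :=
        dist_le_of_coord _ _ (by positivity) key
    _ = (4*n) * L^j := by ring

lemma dist_Phi_ge (hn : 0 < n) (hQ : 0 < Q) (hL0 : 0 < L) (hLQ : L ≤ 1/(16*Q))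
    {a b : ℕ → Alph n Q} {t : ℕ} (hpre : ∀ m, m < t → a m = b m) (hne : a t ≠ b t) :
    L^t / (4*Q) ≤ dist (Phi n Q L a) (Phi n Q L b) := by
  have hQR : (1:ℝ) ≤ Q := by exact_mod_cast hQ
  have hL2 : L ≤ 1/2 := by
    calc L ≤ 1/(16*Q) := hLQ
      _ ≤ 1/2 := by
        apply div_le_div_of_nonneg_left (by norm_num) (by norm_num)
        nlinarith
  have hL1 : L < 1 := lt_of_le_of_lt hL2 (by norm_num)
  obtain ⟨i, hi⟩ := off_sep hn hQ hne
  have key : L^t / (4*Q) ≤ |Phi n Q L a i - Phi n Q L b i| := by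
    rw [Phi_apply, Phi_apply,
      ← Summable.sum_add_tsum_nat_add (t+1) (summable_phi hQ hL0.le hL1 a i),
      ← Summable.sum_add_tsum_nat_add (t+1) (summable_phi hQ hL0.le hL1 b i)]
    rw [Finset.sum_range_succ, Finset.sum_range_succ]
    have heq : ∑ m ∈ Finset.range t, L^m * off Q (a m) i
        = ∑ m ∈ Finset.range t, L^m * off Q (b m) i :=
      Finset.sum_congr rfl (fun m hm => by rw [hpre m (Finset.mem_range.1 hm)])
    rw [heq]
    have harr : ∀ S u v Ta Tb : ℝ, (S + u + Ta) - (S + v + Tb) = (u - v) + (Ta - Tb) := by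
      intros; ring
    rw [harr]
    have hmain : L^t / (2*Q) ≤ |L^t * off Q (a t) i - L^t * off Q (b t) i| := by
      rw [← mul_sub, abs_mul, abs_of_nonneg (pow_nonneg hL0.le t)]
      calc L^t / (2*Q) = L^t * (1/(2*Q)) := by ring
        _ ≤ L^t * |off Q (a t) i - off Q (b t) i| :=
            mul_le_mul_of_nonneg_left hi (pow_nonneg hL0.le t)
    have htail : |(∑' m, L^(m+(t+1)) * off Q (a (m+(t+1))) i)
        - (∑' m, L^(m+(t+1)) * off Q (b (m+(t+1))) i)| ≤ 4 * L^(t+1) := by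
      calc _ ≤ |∑' m, L^(m+(t+1)) * off Q (a (m+(t+1))) i|
            + |∑' m, L^(m+(t+1)) * off Q (b (m+(t+1))) i| := abs_sub _ _
        _ ≤ 2 * L^(t+1) + 2 * L^(t+1) :=
            add_le_add (tail_bound hQ hL0.le hL2 a i (t+1)) (tail_bound hQ hL0.le hL2 b i (t+1))
        _ = 4 * L^(t+1) := by ring
    have h4 : 4 * L^(t+1) ≤ L^t / (4*Q) := by
      have : L^(t+1) = L * L^t := by ring
      rw [this]
      have hpt : 0 ≤ L^t := pow_nonneg hL0.le t
      have : L * L^t ≤ (1/(16*Q)) * L^t := mul_le_mul_of_nonneg_right hLQ hpt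
      calc 4 * (L * L^t) ≤ 4 * ((1/(16*Q)) * L^t) := by linarith
        _ = L^t / (4*Q) := by field_simp; ring
    set TA := ∑' m, L^(m+(t+1)) * off Q (a (m+(t+1))) i with hTA
    set TB := ∑' m, L^(m+(t+1)) * off Q (b (m+(t+1))) i with hTB
    set U := L^t * off Q (a t) i - L^t * off Q (b t) i with hU
    have hlow : |U| - |TA - TB| ≤ |U + (TA - TB)| := by
      have h := abs_sub_abs_le_abs_sub U (-(TA - TB))
      rw [sub_neg_eq_add, abs_neg] at h
      exact h
    have hQne : (Q:ℝ) ≠ 0 := by positivity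
    have hhalf : L^t/(2*(Q:ℝ)) - L^t/(4*(Q:ℝ)) = L^t/(4*(Q:ℝ)) := by
      field_simp
      ring
    linarith
  exact le_trans key (coord_le_dist _ _ i)

end Geometry

section Family

variable {n Q : ℕ} {L : ℝ}

/-- Branches with prescribed flavor sequence `x`. -/
def Br (n Q : ℕ) (x : ℕ → Bool) : Set (ℕ → Alph n Q) := {a | ∀ j, (a j).1 = x j}

/-- The Cantor-type compact set with parameter `x`. -/
def KK (n Q : ℕ) (L : ℝ) (x : ℕ → Bool) : Set (EuclideanSpace ℝ (Fin n)) :=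
  Phi n Q L '' Br n Q x

lemma continuous_Phi (hQ : 0 < Q) (hL0 : 0 ≤ L) (hL1 : L < 1) :
    Continuous (Phi n Q L) := by
  have : Continuous fun (a : ℕ → Alph n Q) => (fun i => ∑' j, L ^ j * off Q (a j) i : Fin n → ℝ) := by
    apply continuous_pi
    intro i
    apply continuous_tsum (u := fun j => L ^ j)
    · intro j
      exact continuous_const.mul
        ((continuous_of_discreteTopology (f := fun v : Alph n Q => off Q v i)).comp
          (continuous_apply j))
    · exact summable_geometric_of_lt_one hL0 hL1
    · intro j a
      simpa only [Real.norm_eq_abs] using term_abs_le hQ hL0 a i j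
  exact (PiLp.continuous_toLp 2 (fun _ : Fin n => ℝ)).comp this

lemma isClosed_Br (x : ℕ → Bool) : IsClosed (Br n Q x) := by
  have h : Br n Q x = ⋂ j, (fun a : ℕ → Alph n Q => a j) ⁻¹' {v : Alph n Q | v.1 = x j} := by
    ext a; simp [Br, Set.mem_iInter]
  rw [h]
  exact isClosed_iInter fun j => (isClosed_discrete _).preimage (continuous_apply j)

lemma isCompact_KK (hQ : 0 < Q) (hL0 : 0 ≤ L) (hL1 : L < 1) (x : ℕ → Bool) :
    IsCompact (KK n Q L x) :=
  ((isClosed_Br x).isCompact).image (continuous_Phi hQ hL0 hL1)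

lemma Phi_inj (hn : 0 < n) (hQ : 0 < Q) (hL0 : 0 < L) (hLQ : L ≤ 1/(16*Q))
    {a b : ℕ → Alph n Q} (hab : a ≠ b) : Phi n Q L a ≠ Phi n Q L b := by
  have hex : ∃ m, a m ≠ b m := by
    by_contra hc; push_neg at hc; exact hab (funext hc)
  classical
  set t0 := Nat.find hex with ht0
  have hne : a t0 ≠ b t0 := Nat.find_spec hex
  have hpre : ∀ m, m < t0 → a m = b m := fun m hm => of_not_not (Nat.find_min hex hm)
  have hdist := dist_Phi_ge hn hQ hL0 hLQ hpre hne
  have hpos : 0 < L^t0 / (4*(Q:ℝ)) := by positivity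
  intro hcontra
  rw [hcontra] at hdist
  simp only [dist_self] at hdist
  linarith

lemma KK_disjoint (hn : 0 < n) (hQ : 0 < Q) (hL0 : 0 < L) (hLQ : L ≤ 1/(16*Q))
    {x y : ℕ → Bool} (hxy : x ≠ y) : Disjoint (KK n Q L x) (KK n Q L y) := by
  rw [Set.disjoint_left]
  rintro z ⟨a, ha, rfl⟩ ⟨b, hb, hzb⟩
  have hab : a ≠ b := by
    have hex : ∃ j, x j ≠ y j := by
      by_contra hc; push_neg at hc; exact hxy (funext hc)
    obtain ⟨j, hj⟩ := hex
    intro hce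
    apply hj
    rw [← ha j, ← hb j, hce]
  exact Phi_inj hn hQ hL0 hLQ hab hzb.symm

lemma KK_nonempty (hQ : 0 < Q) (x : ℕ → Bool) : (KK n Q L x).Nonempty := by
  refine ⟨Phi n Q L (fun m => (x m, fun _ => ⟨0, hQ⟩)), ⟨_, fun j => rfl, rfl⟩⟩

end Family

section MeasureUpper

variable {n Q : ℕ} {L r : ℝ}

/-- Admissible prefixes of length `j`. -/
def Pref (n Q : ℕ) (x : ℕ → Bool) (j : ℕ) := {p : Fin j → Alph n Q // ∀ t, (p t).1 = x t}

instance (x : ℕ → Bool) (j : ℕ) : Fintype (Pref n Q x j) := by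
  unfold Pref; infer_instance

def prefEquiv (n Q : ℕ) (x : ℕ → Bool) (j : ℕ) : Pref n Q x j ≃ (Fin j → Fin n → Fin Q) where
  toFun p t := (p.1 t).2
  invFun w := ⟨fun t => (x t, w t), fun t => rfl⟩
  left_inv p := by
    apply Subtype.ext; funext t
    show (x (t:ℕ), (p.1 t).2) = p.1 t
    rw [← p.2 t]
  right_inv w := rfl

lemma card_Pref (x : ℕ → Bool) (j : ℕ) :
    Fintype.card (Pref n Q x j) = (Q^n)^j := by
  rw [Fintype.card_congr (prefEquiv n Q x j)]
  simp [Fintype.card_fun, pow_mul]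

/-- The piece of level `j` with admissible prefix `p`. -/
def piece (n Q : ℕ) (L : ℝ) (x : ℕ → Bool) (j : ℕ) (p : Pref n Q x j) :
    Set (EuclideanSpace ℝ (Fin n)) :=
  Phi n Q L '' {a | a ∈ Br n Q x ∧ ∀ t : Fin j, a (t:ℕ) = p.1 t}

lemma diam_piece_le (hn : 0 < n) (hQ : 0 < Q) (hL0 : 0 ≤ L) (hL2 : L ≤ 1/2)
    (x : ℕ → Bool) (j : ℕ) (p : Pref n Q x j) :
    EMetric.diam (piece n Q L x j p) ≤ ENNReal.ofReal ((4*n) * L^j) := by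
  apply EMetric.diam_le
  rintro z ⟨a, ⟨-, ha⟩, rfl⟩ w ⟨b, ⟨-, hb⟩, rfl⟩
  rw [edist_dist]
  apply ENNReal.ofReal_le_ofReal
  apply dist_Phi_le hn hQ hL0 hL2
  intro m hm
  rw [ha ⟨m, hm⟩, hb ⟨m, hm⟩]

lemma cover_piece (x : ℕ → Bool) (j : ℕ) :
    KK n Q L x ⊆ ⋃ p : Pref n Q x j, piece n Q L x j p := by
  rintro z ⟨a, ha, rfl⟩
  exact Set.mem_iUnion.2 ⟨⟨fun t => a (t:ℕ), fun t => ha (t:ℕ)⟩, ⟨a, ⟨ha, fun t => rfl⟩, rfl⟩⟩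

lemma measure_KK_le (hn : 0 < n) (hQ : 0 < Q) (hr0 : 0 < r)
    (hkey : ((16*(Q:ℝ))) ^ r ≤ (Q:ℝ) ^ n) (x : ℕ → Bool) :
    μH[r] (KK n Q (lam n Q r) x) ≤ ENNReal.ofReal ((4*n)^r) := by
  set L := lam n Q r with hLdef
  have hL0 : 0 < L := lam_pos hQ
  have hL1 : L < 1 := lam_lt_one hQ hr0 hkey
  have hL2 : L ≤ 1/2 := lam_le_half hQ hr0 hkey
  have hn4 : (0:ℝ) < 4*n := by positivity
  have htend : Tendsto (fun j : ℕ => ENNReal.ofReal ((4*n) * L^j)) atTop (nhds 0) := by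
    have h1 : Tendsto (fun j : ℕ => (4*(n:ℝ)) * L^j) atTop (nhds 0) := by
      have := (tendsto_pow_atTop_nhds_zero_of_lt_one hL0.le hL1).const_mul (4*(n:ℝ))
      simpa using this
    have h2 := (ENNReal.continuous_ofReal.tendsto 0).comp h1
    simpa only [Function.comp_def, ENNReal.ofReal_zero] using h2
  have hbound := MeasureTheory.Measure.hausdorffMeasure_le_liminf_sum r (KK n Q L x)
    (fun j : ℕ => ENNReal.ofReal ((4*n) * L^j)) htend
    (fun j p => piece n Q L x j p)
    (Eventually.of_forall (fun j p => diam_piece_le hn hQ hL0.le hL2 x j p))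
    (Eventually.of_forall (fun j => cover_piece x j))
  refine le_trans hbound ?_
  have hstep : ∀ j : ℕ, (∑ p : Pref n Q x j, EMetric.diam (piece n Q L x j p) ^ r)
      ≤ ENNReal.ofReal ((4*n)^r) := by
    intro j
    have hterm : ∀ p : Pref n Q x j,
        EMetric.diam (piece n Q L x j p) ^ r ≤ ENNReal.ofReal (((4*n) * L^j)^r) := by
      intro p
      calc EMetric.diam (piece n Q L x j p) ^ r
          ≤ (ENNReal.ofReal ((4*n) * L^j)) ^ r :=
            ENNReal.rpow_le_rpow (diam_piece_le hn hQ hL0.le hL2 x j p) hr0.le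
        _ = ENNReal.ofReal (((4*n) * L^j)^r) :=
            ENNReal.ofReal_rpow_of_pos (by positivity)
    calc (∑ p : Pref n Q x j, EMetric.diam (piece n Q L x j p) ^ r)
        ≤ Finset.univ.card • ENNReal.ofReal (((4*n) * L^j)^r) :=
          Finset.sum_le_card_nsmul _ _ _ (fun p _ => hterm p)
      _ = ((Q^n)^j : ℕ) * ENNReal.ofReal (((4*n) * L^j)^r) := by
          rw [nsmul_eq_mul, Finset.card_univ, card_Pref]
      _ = ENNReal.ofReal (((Q^n)^j : ℕ) * ((4*n) * L^j)^r) := by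
          rw [ENNReal.ofReal_mul (by positivity), ENNReal.ofReal_natCast]
      _ = ENNReal.ofReal ((4*n)^r) := by
          congr 1
          have hB : (0:ℝ) < (Q:ℝ)^n := base_pos hQ
          have hcast : (((Q^n)^j : ℕ) : ℝ) = ((Q:ℝ)^n)^j := by push_cast; ring
          rw [hcast, Real.mul_rpow hn4.le (pow_nonneg hL0.le j), lam_pow_rpow hQ hr0 j]
          field_simp
  calc liminf (fun j : ℕ => ∑ p : Pref n Q x j, EMetric.diam (piece n Q L x j p) ^ r) atTop
      ≤ liminf (fun _ : ℕ => ENNReal.ofReal ((4*n)^r)) atTop :=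
        liminf_le_liminf (Eventually.of_forall hstep)
    _ = ENNReal.ofReal ((4*n)^r) := liminf_const _

end MeasureUpper

section MeasureLower

variable {n Q : ℕ} {L r : ℝ}

/-- Extend a prefix to a full branch. -/
def extb (n : ℕ) {Q : ℕ} (hQ : 0 < Q) (x : ℕ → Bool) {j : ℕ} (p : Fin j → Alph n Q) :
    ℕ → Alph n Q :=
  fun m => if h : m < j then p ⟨m, h⟩ else (x m, fun _ => ⟨0, hQ⟩)

lemma extb_mem (hQ : 0 < Q) (x : ℕ → Bool) {j : ℕ} (p : Fin j → Alph n Q)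
    (hp : ∀ t, (p t).1 = x (t : ℕ)) : extb n hQ x p ∈ Br n Q x := by
  intro m
  unfold extb
  split
  · exact hp ⟨m, by assumption⟩
  · rfl

lemma extb_prefix (hQ : 0 < Q) (x : ℕ → Bool) {j : ℕ} (p : Fin j → Alph n Q) (t : Fin j) :
    extb n hQ x p (t : ℕ) = p t := by
  unfold extb
  rw [dif_pos t.isLt]

lemma combinatorial (hn : 0 < n) (hQ : 0 < Q) (hr0 : 0 < r)
    (hkey : ((16*(Q:ℝ))) ^ r ≤ (Q:ℝ) ^ n) (x : ℕ → Bool)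
    (I : Finset ℕ) (u : ℕ → Set (EuclideanSpace ℝ (Fin n)))
    (huo : ∀ m ∈ I, IsOpen (u m)) (hub : ∀ m ∈ I, Bornology.IsBounded (u m))
    (hcov : KK n Q (lam n Q r) x ⊆ ⋃ m ∈ I, u m) :
    (lam n Q r / (4*Q))^r ≤ ∑ m ∈ I, (Metric.diam (u m))^r := by
  classical
  set L := lam n Q r with hLdef
  have hL0 : 0 < L := lam_pos hQ
  have hL1 : L < 1 := lam_lt_one hQ hr0 hkey
  have hLQ : L ≤ 1/(16*Q) := lam_le hQ hr0 hkey
  have hQ4 : (0:ℝ) < 4*Q := by positivity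
  set J := I.filter (fun m => (u m ∩ KK n Q L x).Nonempty) with hJdef
  have hJI : J ⊆ I := Finset.filter_subset _ _
  -- each relevant open set has positive diameter
  have hρpos : ∀ m ∈ J, 0 < Metric.diam (u m) := by
    intro m hm
    obtain ⟨hmI, hne⟩ := Finset.mem_filter.1 hm
    obtain ⟨z, hzu, -⟩ := hne
    obtain ⟨δ, hδ0, hball⟩ := Metric.isOpen_iff.1 (huo m hmI) z hzu
    set v : EuclideanSpace ℝ (Fin n) := EuclideanSpace.single ⟨0, hn⟩ (1:ℝ) with hv
    have hvn : ‖v‖ = 1 := by rw [hv, EuclideanSpace.norm_single]; simp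
    set w := z + (δ/2) • v with hw
    have hdzw : dist z w = δ/2 := by
      rw [hw, dist_self_add_right, norm_smul, hvn, Real.norm_eq_abs, abs_of_pos (by linarith)]
      ring
    have hwu : w ∈ u m := hball (by
      rw [Metric.mem_ball, dist_comm, hdzw]
      linarith)
    have := Metric.dist_le_diam_of_mem (hub m hmI) hzu hwu
    linarith [hdzw ▸ this]
  -- scale index
  have hexk : ∀ m ∈ J, ∃ k : ℕ, L^(k+1)/(4*Q) ≤ Metric.diam (u m) := by
    intro m hm
    obtain ⟨k, hk⟩ := exists_pow_lt_of_lt_one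
      (mul_pos hQ4 (hρpos m hm)) hL1
    refine ⟨k, ?_⟩
    rw [div_le_iff₀ hQ4]
    calc L^(k+1) ≤ L^k := pow_le_pow_of_le_one hL0.le hL1.le (by omega)
      _ ≤ 4*(Q:ℝ) * Metric.diam (u m) := hk.le
      _ = Metric.diam (u m) * (4*Q) := by ring
  set kk : ℕ → ℕ := fun m =>
    if h : ∃ k : ℕ, L^(k+1)/(4*Q) ≤ Metric.diam (u m) then Nat.find h else 0 with hkkdef
  have hkka : ∀ m ∈ J, L^(kk m + 1)/(4*Q) ≤ Metric.diam (u m) := by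
    intro m hm
    have h := hexk m hm
    simp only [hkkdef, dif_pos h]
    exact Nat.find_spec h
  have hkkb : ∀ m ∈ J, ∀ t, t < kk m → Metric.diam (u m) < L^(t+1)/(4*Q) := by
    intro m hm t ht
    have h := hexk m hm
    simp only [hkkdef, dif_pos h] at ht
    have := Nat.find_min h ht
    linarith [lt_of_not_ge this]
  set j := J.sup kk with hjdef
  have hkkj : ∀ m ∈ J, kk m ≤ j := fun m hm => Finset.le_sup hm
  -- choose a covering index for each admissible prefix
  have hch : ∀ p : Pref n Q x j, ∃ m, m ∈ J ∧ Phi n Q L (extb n hQ x p.1) ∈ u m := by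
    intro p
    have hmem : Phi n Q L (extb n hQ x p.1) ∈ KK n Q L x :=
      ⟨_, extb_mem hQ x p.1 p.2, rfl⟩
    obtain ⟨m, hmI, hmu⟩ := Set.mem_iUnion₂.1 (hcov hmem)
    exact ⟨m, Finset.mem_filter.2 ⟨hmI, ⟨_, hmu, hmem⟩⟩, hmu⟩
  choose σ hσJ hσu using hch
  -- fiber counting
  have hfiber : ∀ m ∈ J,
      (Finset.univ.filter (fun p : Pref n Q x j => σ p = m)).card ≤ (Q^n)^(j - kk m) := by
    intro m hm
    have hkmj := hkkj m hm
    have hinj : Set.InjOn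
        (fun p : Pref n Q x j => fun t : Fin (j - kk m) =>
          (p.1 ⟨kk m + (t:ℕ), by omega⟩).2)
        ↑(Finset.univ.filter (fun p : Pref n Q x j => σ p = m)) := by
      intro p hp q hq hgpq
      simp only [Finset.coe_filter, Set.mem_setOf_eq] at hp hq
      apply Subtype.ext
      funext t
      by_cases ht : (t : ℕ) < kk m
      · by_contra hne'
        set a := extb n hQ x p.1 with ha
        set b := extb n hQ x q.1 with hb
        have hex : ∃ s, a s ≠ b s := by
          refine ⟨(t:ℕ), ?_⟩
          rw [ha, hb, extb_prefix, extb_prefix]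
          exact hne'
        have ht0le : Nat.find hex ≤ (t:ℕ) := Nat.find_min' hex (by
          rw [ha, hb, extb_prefix, extb_prefix]; exact hne')
        have ht0lt : Nat.find hex < kk m := lt_of_le_of_lt ht0le ht
        have hd := dist_Phi_ge hn hQ hL0 hLQ
          (fun s hs => of_not_not (Nat.find_min hex hs)) (Nat.find_spec hex)
        have hpm : Phi n Q L a ∈ u m := by rw [ha, ← hp.2]; exact hσu p
        have hqm : Phi n Q L b ∈ u m := by rw [hb, ← hq.2]; exact hσu q
        have hdd := Metric.dist_le_diam_of_mem (hub m (hJI hm)) hpm hqm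
        have hsmall := hkkb m hm (Nat.find hex) ht0lt
        have hmono : L^(Nat.find hex + 1)/(4*(Q:ℝ)) ≤ L^(Nat.find hex)/(4*Q) := by
          have hp : L^(Nat.find hex + 1) ≤ L^(Nat.find hex) :=
            pow_le_pow_of_le_one hL0.le hL1.le (by omega)
          rw [div_eq_mul_inv, div_eq_mul_inv]
          exact mul_le_mul_of_nonneg_right hp (by positivity)
        linarith
      · have h2 : (p.1 t).2 = (q.1 t).2 := by
          have hc := congrFun hgpq ⟨(t:ℕ) - kk m, by omega⟩
          simp only at hc
          have harg : (⟨kk m + ((t:ℕ) - kk m), by omega⟩ : Fin j) = t := by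
            apply Fin.ext; simp; omega
          rwa [harg] at hc
        have h1 : (p.1 t).1 = (q.1 t).1 := by rw [p.2 t, q.2 t]
        exact Prod.ext h1 h2
    have := Finset.card_le_card_of_injOn _
      (fun p _ => Finset.mem_univ (α := Fin (j - kk m) → Fin n → Fin Q) _) hinj
    calc (Finset.univ.filter (fun p : Pref n Q x j => σ p = m)).card
        ≤ Fintype.card (Fin (j - kk m) → Fin n → Fin Q) := by
          simpa [Finset.card_univ] using this
      _ = (Q^n)^(j - kk m) := by simp [Fintype.card_fun, pow_mul]
  -- total count
  have hcount : ((Q^n)^j : ℕ) ≤ ∑ m ∈ J, (Q^n)^(j - kk m) := by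
    calc ((Q^n)^j : ℕ) = Fintype.card (Pref n Q x j) := (card_Pref x j).symm
      _ = (Finset.univ : Finset (Pref n Q x j)).card := Finset.card_univ.symm
      _ = ∑ m ∈ J, (Finset.univ.filter (fun p : Pref n Q x j => σ p = m)).card :=
          Finset.card_eq_sum_card_fiberwise (fun p _ => hσJ p)
      _ ≤ ∑ m ∈ J, (Q^n)^(j - kk m) := Finset.sum_le_sum hfiber
  -- pass to the reals
  set B : ℝ := (Q:ℝ)^n with hBdef
  have hB0 : 0 < B := base_pos hQ
  have hreal : B^j ≤ ∑ m ∈ J, B^j * (B^(kk m))⁻¹ := by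
    have hc : ((((Q^n)^j : ℕ)) : ℝ) ≤ ∑ m ∈ J, (((Q^n)^(j - kk m) : ℕ) : ℝ) := by
      exact_mod_cast hcount
    calc B^j = ((((Q^n)^j : ℕ)) : ℝ) := by push_cast [hBdef]; ring
      _ ≤ ∑ m ∈ J, (((Q^n)^(j - kk m) : ℕ) : ℝ) := hc
      _ = ∑ m ∈ J, B^j * (B^(kk m))⁻¹ := by
          apply Finset.sum_congr rfl
          intro m hm
          have hkmj := hkkj m hm
          have : (((Q^n)^(j - kk m) : ℕ) : ℝ) = B^(j - kk m) := by push_cast [hBdef]; ring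
          rw [this, pow_sub₀ B hB0.ne' hkmj]
  have hone : 1 ≤ ∑ m ∈ J, (B^(kk m))⁻¹ := by
    rw [← Finset.mul_sum] at hreal
    have hBj : (0:ℝ) < B^j := pow_pos hB0 j
    nlinarith [hreal]
  -- convert to diameters
  have hconv : ∀ m ∈ J, (B^(kk m))⁻¹ ≤ (Metric.diam (u m) * (4*Q) / L)^r := by
    intro m hm
    rw [← lam_pow_rpow hQ hr0 (kk m)]
    apply Real.rpow_le_rpow (pow_nonneg hL0.le _) ?_ hr0.le
    have h1 := hkka m hm
    rw [div_le_iff₀ hQ4] at h1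
    rw [le_div_iff₀ hL0]
    calc L^(kk m) * L = L^(kk m + 1) := by ring
      _ ≤ Metric.diam (u m) * (4*Q) := h1
  have hfinal : 1 ≤ ∑ m ∈ J, (Metric.diam (u m) * (4*Q) / L)^r :=
    le_trans hone (Finset.sum_le_sum hconv)
  have hsplit : ∀ m, (Metric.diam (u m) * (4*Q) / L)^r
      = (Metric.diam (u m))^r * ((4*Q)/L)^r := by
    intro m
    rw [show Metric.diam (u m) * (4*(Q:ℝ)) / L = Metric.diam (u m) * ((4*Q)/L) by ring,
      Real.mul_rpow Metric.diam_nonneg (by positivity)]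
  have hC0 : (0:ℝ) < ((4*(Q:ℝ))/L)^r := Real.rpow_pos_of_pos (by positivity) _
  have hmul : (L/(4*Q))^r * ((4*Q)/L)^r = 1 := by
    rw [← Real.mul_rpow (by positivity) (by positivity)]
    rw [show (L/(4*(Q:ℝ))) * ((4*Q)/L) = 1 by field_simp]
    exact Real.one_rpow r
  have hsum2 : (L/(4*Q))^r ≤ ∑ m ∈ J, (Metric.diam (u m))^r := by
    have h1 : 1 ≤ (∑ m ∈ J, (Metric.diam (u m))^r) * ((4*Q)/L)^r := by
      rw [Finset.sum_mul]
      calc (1:ℝ) ≤ ∑ m ∈ J, (Metric.diam (u m) * (4*Q) / L)^r := hfinal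
        _ = ∑ m ∈ J, (Metric.diam (u m))^r * ((4*Q)/L)^r :=
          Finset.sum_congr rfl (fun m _ => hsplit m)
    have h2 := mul_le_mul_of_nonneg_left h1 (le_of_lt (Real.rpow_pos_of_pos (by positivity : (0:ℝ) < L/(4*Q)) r))
    rw [mul_one] at h2
    calc (L/(4*Q))^r ≤ (L/(4*Q))^r * ((∑ m ∈ J, (Metric.diam (u m))^r) * ((4*Q)/L)^r) := h2
      _ = ((L/(4*Q))^r * ((4*Q)/L)^r) * (∑ m ∈ J, (Metric.diam (u m))^r) := by ring
      _ = ∑ m ∈ J, (Metric.diam (u m))^r := by rw [hmul, one_mul]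
  calc (L/(4*Q))^r ≤ ∑ m ∈ J, (Metric.diam (u m))^r := hsum2
    _ ≤ ∑ m ∈ I, (Metric.diam (u m))^r :=
      Finset.sum_le_sum_of_subset_of_nonneg hJI
        (fun m _ _ => Real.rpow_nonneg Metric.diam_nonneg r)

lemma measure_KK_pos (hn : 0 < n) (hQ : 0 < Q) (hr0 : 0 < r)
    (hkey : ((16*(Q:ℝ))) ^ r ≤ (Q:ℝ) ^ n) (x : ℕ → Bool) :
    ENNReal.ofReal ((lam n Q r / (4*Q))^r / 2) ≤ μH[r] (KK n Q (lam n Q r) x) := by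
  classical
  set L := lam n Q r with hLdef
  have hL0 : 0 < L := lam_pos hQ
  have hL1 : L < 1 := lam_lt_one hQ hr0 hkey
  set c0 : ℝ := (L / (4*Q))^r with hc0def
  have hc0 : 0 < c0 := Real.rpow_pos_of_pos (by positivity) _
  rw [MeasureTheory.Measure.hausdorffMeasure_apply]
  refine le_iSup₂_of_le 1 one_pos ?_
  refine le_iInf fun t => le_iInf fun hcov => le_iInf fun _ => ?_
  by_cases htop : ∃ m, (t m).Nonempty ∧ EMetric.diam (t m) = ⊤
  · obtain ⟨m, hne, hdm⟩ := htop
    have hterm : (⨆ _ : (t m).Nonempty, EMetric.diam (t m) ^ r) = ⊤ := by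
      simp [hne, hdm, ENNReal.top_rpow_of_pos hr0]
    have hle := ENNReal.le_tsum (f := fun m => ⨆ _ : (t m).Nonempty, EMetric.diam (t m) ^ r) m
    rw [hterm] at hle
    exact le_trans le_top hle
  push_neg at htop
  -- choose enlargement parameters
  have hchoose : ∀ m : ℕ, ∃ δ : ℝ, 0 < δ ∧
      (Metric.diam (t m) + 2*δ)^r ≤ (Metric.diam (t m))^r + c0/2 * (1/2)^(m+1) := by
    intro m
    set d := Metric.diam (t m) with hd
    have hca : ContinuousAt (fun e : ℝ => (d + 2*e)^r) 0 := by
      apply ContinuousAt.rpow_const ?_ (Or.inr hr0.le)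
      fun_prop
    have h0 : (fun e : ℝ => (d + 2*e)^r) 0 = d^r := by norm_num
    have hlt : (fun e : ℝ => (d + 2*e)^r) 0 < d^r + c0/2 * (1/2)^(m+1) := by
      rw [h0]
      have : (0:ℝ) < c0/2 * (1/2)^(m+1) := by positivity
      linarith
    have hev : ∀ᶠ e in nhds (0:ℝ), (d + 2*e)^r < d^r + c0/2 * (1/2)^(m+1) :=
      hca.eventually_lt_const hlt
    have hev2 : ∀ᶠ e in nhdsWithin (0:ℝ) (Set.Ioi 0),
        (d + 2*e)^r < d^r + c0/2 * (1/2)^(m+1) :=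
      eventually_nhdsWithin_of_eventually_nhds hev
    have hself : ∀ᶠ e in nhdsWithin (0:ℝ) (Set.Ioi 0), e ∈ Set.Ioi (0:ℝ) :=
      eventually_mem_nhdsWithin
    obtain ⟨δ, hδ1, hδ2⟩ := (hev2.and hself).exists
    exact ⟨δ, hδ2, hδ1.le⟩
  choose δ hδpos hδ using hchoose
  set u : ℕ → Set (EuclideanSpace ℝ (Fin n)) := fun m =>
    if (t m).Nonempty then Metric.thickening (δ m) (t m) else ∅ with hudef
  have huo : ∀ m, IsOpen (u m) := by
    intro m
    simp only [hudef]
    split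
    · exact Metric.isOpen_thickening
    · exact isOpen_empty
  have hub : ∀ m, Bornology.IsBounded (u m) := by
    intro m
    simp only [hudef]
    split
    · next h =>
        exact (Metric.isBounded_iff_ediam_ne_top.2 (htop m h)).thickening
    · exact Bornology.isBounded_empty
  have hsub : ∀ m, t m ⊆ u m := by
    intro m
    simp only [hudef]
    split
    · exact Metric.self_subset_thickening (hδpos m) _
    · next h =>
        rw [Set.not_nonempty_iff_eq_empty.1 h]
  have hcov' : KK n Q L x ⊆ ⋃ m, u m :=
    le_trans hcov (Set.iUnion_mono hsub)
  obtain ⟨I, hI⟩ := (isCompact_KK hQ hL0.le hL1 x).elim_finite_subcover u huo hcov'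
  have hstep3 := combinatorial hn hQ hr0 hkey x I u (fun m _ => huo m) (fun m _ => hub m) hI
  -- diameters of the enlargements
  have hdiamu : ∀ m, (Metric.diam (u m))^r
      ≤ (Metric.diam (t m))^r + c0/2 * (1/2)^(m+1) := by
    intro m
    have hd1 : Metric.diam (u m) ≤ Metric.diam (t m) + 2 * δ m := by
      simp only [hudef]
      split
      · exact Metric.diam_thickening_le _ (hδpos m).le
      · simp only [Metric.diam_empty]
        have := Metric.diam_nonneg (s := t m)
        linarith [hδpos m]
    calc (Metric.diam (u m))^r ≤ (Metric.diam (t m) + 2 * δ m)^r :=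
        Real.rpow_le_rpow Metric.diam_nonneg hd1 hr0.le
      _ ≤ (Metric.diam (t m))^r + c0/2 * (1/2)^(m+1) := hδ m
  -- geometric slack
  have hgeom : ∑ m ∈ I, (c0/2 * ((1:ℝ)/2)^(m+1)) ≤ c0/2 := by
    have hs : Summable (fun m : ℕ => c0/2 * ((1:ℝ)/2)^(m+1)) := by
      simp only [pow_succ]
      exact (((summable_geometric_of_lt_one (by norm_num) (by norm_num)).mul_right _).mul_left _)
    have hts : ∑' m : ℕ, (c0/2 * ((1:ℝ)/2)^(m+1)) = c0/2 := by
      rw [tsum_mul_left]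
      simp only [pow_succ]
      rw [tsum_mul_right, tsum_geometric_of_lt_one (by norm_num) (by norm_num)]
      norm_num
    calc ∑ m ∈ I, (c0/2 * ((1:ℝ)/2)^(m+1)) ≤ ∑' m : ℕ, (c0/2 * ((1:ℝ)/2)^(m+1)) :=
        Summable.sum_le_tsum I (fun m _ => by positivity) hs
      _ = c0/2 := hts
  have hlower : c0/2 ≤ ∑ m ∈ I, (Metric.diam (t m))^r := by
    have h1 : c0 ≤ ∑ m ∈ I, ((Metric.diam (t m))^r + c0/2 * (1/2)^(m+1)) :=
      le_trans hstep3 (Finset.sum_le_sum fun m _ => hdiamu m)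
    rw [Finset.sum_add_distrib] at h1
    linarith [hgeom]
  -- back to `ℝ≥0∞`
  have hterm : ∀ m, ENNReal.ofReal ((Metric.diam (t m))^r)
      ≤ ⨆ _ : (t m).Nonempty, EMetric.diam (t m) ^ r := by
    intro m
    by_cases hm : (t m).Nonempty
    · simp only [hm, iSup_pos]
      have hfin : EMetric.diam (t m) ≠ ⊤ := htop m hm
      have heq : ENNReal.ofReal (Metric.diam (t m)) = EMetric.diam (t m) :=
        ENNReal.ofReal_toReal hfin
      rcases eq_or_lt_of_le (Metric.diam_nonneg (s := t m)) with hz | hz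
      · rw [← hz, Real.zero_rpow hr0.ne']
        simp
      · rw [← heq, ENNReal.ofReal_rpow_of_pos hz]
    · have : t m = ∅ := Set.not_nonempty_iff_eq_empty.1 hm
      simp [hm, this, Metric.diam_empty, Real.zero_rpow hr0.ne']
  calc ENNReal.ofReal (c0/2) ≤ ENNReal.ofReal (∑ m ∈ I, (Metric.diam (t m))^r) :=
      ENNReal.ofReal_le_ofReal hlower
    _ = ∑ m ∈ I, ENNReal.ofReal ((Metric.diam (t m))^r) :=
      ENNReal.ofReal_sum_of_nonneg (fun m _ => Real.rpow_nonneg Metric.diam_nonneg r)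
    _ ≤ ∑ m ∈ I, ⨆ _ : (t m).Nonempty, EMetric.diam (t m) ^ r :=
      Finset.sum_le_sum (fun m _ => hterm m)
    _ ≤ ∑' m, ⨆ _ : (t m).Nonempty, EMetric.diam (t m) ^ r := ENNReal.sum_le_tsum I

end MeasureLower

lemma exists_Q (n : ℕ) (r : ℝ) (hr0 : 0 < r) (hrn : r < n) :
    ∃ Q : ℕ, 0 < Q ∧ ((16*(Q:ℝ))) ^ r ≤ (Q:ℝ) ^ n := by
  have hd : (0:ℝ) < n - r := by linarith
  have htt := tendsto_rpow_atTop hd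
  have hev := htt.eventually_ge_atTop (((16:ℝ))^(n:ℕ))
  obtain ⟨x0, hx0, hx01⟩ := (hev.and (eventually_ge_atTop (1:ℝ))).exists
  refine ⟨⌈x0⌉₊, ?_, ?_⟩
  · have : (1:ℝ) ≤ (⌈x0⌉₊ : ℝ) := le_trans hx01 (Nat.le_ceil x0)
    exact_mod_cast lt_of_lt_of_le zero_lt_one this
  set Q := ⌈x0⌉₊ with hQdef
  have hx0Q : x0 ≤ (Q:ℝ) := Nat.le_ceil x0
  have hQ1 : (1:ℝ) ≤ (Q:ℝ) := le_trans hx01 hx0Q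
  have hQ0 : (0:ℝ) < (Q:ℝ) := lt_of_lt_of_le zero_lt_one hQ1
  have hQnr : ((16:ℝ))^(n:ℕ) ≤ (Q:ℝ) ^ ((n:ℝ) - r) := by
    calc ((16:ℝ))^(n:ℕ) ≤ x0 ^ ((n:ℝ) - r) := hx0
      _ ≤ (Q:ℝ) ^ ((n:ℝ) - r) :=
        Real.rpow_le_rpow (le_trans zero_le_one hx01) hx0Q hd.le
  have h16 : ((16:ℝ)) ^ r ≤ ((16:ℝ))^(n:ℕ) := by
    rw [← Real.rpow_natCast (16:ℝ) n]
    apply Real.rpow_le_rpow_of_exponent_le (by norm_num)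
    calc r ≤ (n:ℝ) - 0 := by linarith
      _ = (n:ℝ) := by ring
  calc ((16*(Q:ℝ))) ^ r = (16:ℝ)^r * (Q:ℝ)^r :=
      Real.mul_rpow (by norm_num) hQ0.le
    _ ≤ ((16:ℝ))^(n:ℕ) * (Q:ℝ)^r := by
      apply mul_le_mul_of_nonneg_right h16 (Real.rpow_nonneg hQ0.le r)
    _ ≤ (Q:ℝ) ^ ((n:ℝ) - r) * (Q:ℝ)^r := by
      apply mul_le_mul_of_nonneg_right hQnr (Real.rpow_nonneg hQ0.le r)
    _ = (Q:ℝ) ^ ((n:ℝ)) := by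
      rw [← Real.rpow_add hQ0]
      ring_nf
    _ = (Q:ℝ) ^ n := Real.rpow_natCast _ _

theorem exists_family (n : ℕ) (r : ℝ) (hn : 0 < n) (hr0 : 0 < r) (hrn : r < (n:ℝ)) :
    ∃ K : (ℕ → Bool) → Set (EuclideanSpace ℝ (Fin n)),
      (∀ x, IsCompact (K x)) ∧ (∀ x, (K x).Nonempty) ∧
      (∀ x, 0 < μH[r] (K x)) ∧ (∀ x, μH[r] (K x) < ⊤) ∧
      (∀ x y, x ≠ y → Disjoint (K x) (K y)) := by
  obtain ⟨Q, hQ, hkey⟩ := exists_Q n r hr0 hrn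
  refine ⟨KK n Q (lam n Q r),
    fun x => isCompact_KK hQ (lam_pos hQ).le (lam_lt_one hQ hr0 hkey) x,
    fun x => KK_nonempty hQ x, ?_, ?_, ?_⟩
  · intro x
    refine lt_of_lt_of_le ?_ (measure_KK_pos hn hQ hr0 hkey x)
    apply ENNReal.ofReal_pos.2
    have h := Real.rpow_pos_of_pos
      (div_pos (lam_pos (n := n) (r := r) hQ) (by positivity : (0:ℝ) < 4*Q)) r
    linarith
  · intro x
    exact lt_of_le_of_lt (measure_KK_le hn hQ hr0 hkey x) ENNReal.ofReal_lt_top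
  · intro x y hxy
    exact KK_disjoint hn hQ (lam_pos hQ) (lam_le hQ hr0 hkey) hxy

end CantorConstruction

lemma sigmaFinite_sUnion {n : ℕ} {r : ℝ} (S : Set (Set (EuclideanSpace ℝ (Fin n))))
    (hS : ∀ s ∈ S, SigmaFiniteHausdorff n r s) (hc : S.Countable) :
    SigmaFiniteHausdorff n r (⋃₀ S) := by
  rcases S.eq_empty_or_nonempty with rfl | hne
  · exact ⟨fun _ => ∅, by simp, fun k => by simp⟩
  · obtain ⟨g, rfl⟩ := hc.exists_eq_range hne
    choose B hB1 hB2 using fun m => hS (g m) ⟨m, rfl⟩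
    refine ⟨fun i => B (Nat.unpair i).1 (Nat.unpair i).2, ?_, fun i => hB2 _ _⟩
    have hsurj : Function.Surjective Nat.unpair := fun p =>
      ⟨Nat.pair p.1 p.2, Nat.unpair_pair _ _⟩
    rw [Set.sUnion_range]
    calc ⋃ m, g m = ⋃ m, ⋃ k, B m k := Set.iUnion_congr (fun m => hB1 m)
      _ = ⋃ p : ℕ × ℕ, B p.1 p.2 := by rw [Set.iUnion_prod']
      _ = ⋃ i, B (Nat.unpair i).1 (Nat.unpair i).2 :=
        (hsurj.iUnion_comp (fun p => B p.1 p.2)).symm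


end Construction

/-- `add(I^r_{n,σ-fin}) = ℵ₁`. -/
theorem stmt5 (n : ℕ) (r : ℝ) (hn : 1 ≤ n) (hr0 : 0 < r) (hrn : r < n) :
    addOf {H : Set (EuclideanSpace ℝ (Fin n)) | SigmaFiniteHausdorff n r H} =
      Cardinal.aleph 1 := by

  classical
  set J : Set (Set (EuclideanSpace ℝ (Fin n))) := {H | SigmaFiniteHausdorff n r H} with hJdef
  -- every subfamily of J with non-σ-finite union is uncountable
  have hlb : ∀ c : Cardinal,
      (∃ S ⊆ J, ⋃₀ S ∉ J ∧ Cardinal.mk S = c) → Cardinal.aleph 1 ≤ c := by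
    rintro c ⟨S, hSJ, hSU, rfl⟩
    by_contra hlt
    push_neg at hlt
    have hScnt : S.Countable := (Cardinal.countable_iff_lt_aleph_one S).2 hlt
    exact hSU (sigmaFinite_sUnion S (fun s hs => hSJ hs) hScnt)
  -- construct a witness family of size ℵ₁
  obtain ⟨K, hKcomp, hKne, hKpos, hKfin, hKdisj⟩ :=
    CantorConstruction.exists_family n r hn hr0 hrn
  have hcard : Cardinal.aleph 1 ≤ Cardinal.mk (ℕ → Bool) := by
    calc Cardinal.aleph 1 ≤ Cardinal.continuum := Cardinal.aleph_one_le_continuum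
      _ = 2 ^ Cardinal.aleph0 := (Cardinal.two_power_aleph0).symm
      _ = Cardinal.mk (ℕ → Bool) := by
        rw [Cardinal.mk_arrow]
        simp
  obtain ⟨T, hT⟩ := Cardinal.le_mk_iff_exists_set.1 hcard
  have hKinj : Set.InjOn K T := by
    intro x _ y _ hxy
    by_contra hne
    have hd := hKdisj x y hne
    obtain ⟨z, hz⟩ := hKne x
    exact Set.disjoint_left.1 hd hz (hxy ▸ hz)
  set S : Set (Set (EuclideanSpace ℝ (Fin n))) := K '' T with hSdef
  have hSJ : S ⊆ J := by
    rintro _ ⟨x, -, rfl⟩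
    exact ⟨fun _ => K x, (Set.iUnion_const _).symm, fun _ => hKfin x⟩
  have hcardS : Cardinal.mk S = Cardinal.aleph 1 := by
    rw [hSdef, Cardinal.mk_image_eq_of_injOn K T hKinj, hT]
  have hSU : ⋃₀ S ∉ J := by
    rintro ⟨A, hAU, hAfin⟩
    have hTunc : ¬ T.Countable := by
      rw [Cardinal.countable_iff_lt_aleph_one, hT]
      exact lt_irrefl _
    have hex : ∀ x ∈ T, ∃ k, 0 < μH[r] (A k ∩ K x) := by
      intro x hx
      by_contra hcon
      push_neg at hcon
      have hzero : ∀ k, μH[r] (A k ∩ K x) = 0 := fun k => le_zero_iff.1 (not_lt.1 (hcon k).not_gt)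
      have hsub : K x ⊆ ⋃ k, A k ∩ K x := by
        intro z hz
        have hzU : z ∈ ⋃₀ S := ⟨K x, ⟨x, hx, rfl⟩, hz⟩
        rw [hAU] at hzU
        obtain ⟨k, hk⟩ := Set.mem_iUnion.1 hzU
        exact Set.mem_iUnion.2 ⟨k, hk, hz⟩
      have hle : μH[r] (K x) ≤ ∑' k, μH[r] (A k ∩ K x) :=
        le_trans (measure_mono hsub) (measure_iUnion_le _)
      rw [tsum_congr hzero] at hle
      simp only [tsum_zero] at hle
      exact (hKpos x).ne' (le_antisymm hle zero_le)
    choose! f hf using hex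
    have hTdecomp : T ⊆ ⋃ k : ℕ, {x ∈ T | f x = k} := by
      intro x hx
      exact Set.mem_iUnion.2 ⟨f x, hx, rfl⟩
    have hkex : ∃ k, ¬ ({x ∈ T | f x = k}).Countable := by
      by_contra hcon
      push_neg at hcon
      exact hTunc (Set.Countable.mono hTdecomp (Set.countable_iUnion hcon))
    obtain ⟨k, hk⟩ := hkex
    set Tk := {x ∈ T | f x = k} with hTk
    set μk := (μH[r] : Measure (EuclideanSpace ℝ (Fin n))).restrict (A k) with hμk
    have hmeas : ∀ i : ↥Tk, MeasurableSet (K i.1) := fun i => (hKcomp _).measurableSet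
    have hdisj : Pairwise (Function.onFun Disjoint (fun i : ↥Tk => K i.1)) := by
      intro i j hij
      apply hKdisj
      intro he
      exact hij (Subtype.ext he)
    have hfintop : μk (⋃ i : ↥Tk, K i.1) ≠ ⊤ := by
      apply ne_top_of_le_ne_top _ (measure_mono (Set.subset_univ _))
      rw [MeasureTheory.Measure.restrict_apply_univ]
      exact (hAfin k).ne
    have hcnt := MeasureTheory.Measure.countable_meas_pos_of_disjoint_of_meas_iUnion_ne_top
      μk hmeas hdisj hfintop
    have hall : {i : ↥Tk | 0 < μk (K i.1)} = Set.univ := by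
      ext i
      simp only [Set.mem_setOf_eq, Set.mem_univ, iff_true]
      have hi1 : i.1 ∈ T := i.2.1
      have hi2 : f i.1 = k := i.2.2
      rw [hμk, MeasureTheory.Measure.restrict_apply (hmeas i), Set.inter_comm, ← hi2]
      exact hf i.1 hi1
    rw [hall] at hcnt
    apply hk
    rw [← Set.countable_coe_iff]
    exact (Set.countable_univ_iff).1 hcnt
  -- conclude
  apply le_antisymm
  · exact csInf_le' ⟨S, hSJ, hSU, hcardS⟩
  · exact le_csInf ⟨Cardinal.aleph 1, S, hSJ, hSU, hcardS⟩ hlb
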